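/- For integers a ≥ b ≥ 1 with a - b ≥ 2 and n - k ≥ 3 where a + b = k, one has F(P_{n-k}(a,b)) > F(P_{n-k}(a-1, b+1)). -/

import Mathlib

open SimpleGraph

/-- The number of subtrees of a graph `G`. -/
noncomputable def numSubtrees {V : Type*} [Fintype V] (G : SimpleGraph V) : ℕ :=
  {S : Set V | S.Nonempty ∧ (G.induce S).Connected}.ncard

/-- `P_m(a,b)`: the tree obtained from the path `v_0 v_1 ... v_{m-1}` by attaching `a`
pendant vertices to `v_0` and `b` pendant vertices to `v_{m-1}`. -/
def pathAB (m a b : ℕ) : SimpleGraph (Fin m ⊕ (Fin a ⊕ Fin b)) :=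
  SimpleGraph.fromRel (fun p q =>
    match p, q with
    | Sum.inl i, Sum.inl j => (i : ℕ) + 1 = (j : ℕ)
    | Sum.inl i, Sum.inr (Sum.inl _) => (i : ℕ) = 0
    | Sum.inl i, Sum.inr (Sum.inr _) => (i : ℕ) = m - 1
    | _, _ => False)


namespace PPT

variable {p a b : ℕ}

abbrev Vt (p a b : ℕ) := Fin (p+2) ⊕ (Fin a ⊕ Fin b)

/-- shape of a generic subtree containing path vertices -/
def shape (i j : Fin (p+2)) (A : Set (Fin a)) (B : Set (Fin b)) : Set (Vt p a b) :=
  Sum.inl '' Set.Icc i j ∪ ((Sum.inr ∘ Sum.inl) '' A ∪ (Sum.inr ∘ Sum.inr) '' B)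

@[simp] lemma inl_mem_shape {t i j : Fin (p+2)} {A : Set (Fin a)} {B : Set (Fin b)} :
    Sum.inl t ∈ shape i j A B ↔ i ≤ t ∧ t ≤ j := by
  simp [shape]

@[simp] lemma inrl_mem_shape {x : Fin a} {i j : Fin (p+2)} {A : Set (Fin a)} {B : Set (Fin b)} :
    Sum.inr (Sum.inl x) ∈ shape i j A B ↔ x ∈ A := by
  simp [shape]

@[simp] lemma inrr_mem_shape {x : Fin b} {i j : Fin (p+2)} {A : Set (Fin a)} {B : Set (Fin b)} :
    Sum.inr (Sum.inr x) ∈ shape i j A B ↔ x ∈ B := by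
  simp [shape]


lemma adj_inl_inl {s t : Fin (p+2)} :
    (pathAB (p+2) a b).Adj (Sum.inl s) (Sum.inl t) ↔ ((s:ℕ)+1 = t ∨ (t:ℕ)+1 = s) := by
  constructor
  · rintro ⟨hne, h | h⟩
    · exact Or.inl h
    · exact Or.inr h
  · intro h
    refine ⟨fun hst => ?_, ?_⟩
    · injection hst with hst; subst hst; omega
    · rcases h with h | h
      · exact Or.inl h
      · exact Or.inr h

lemma adj_inl_inrl {s : Fin (p+2)} {x : Fin a} :
    (pathAB (p+2) a b).Adj (Sum.inl s) (Sum.inr (Sum.inl x)) ↔ (s:ℕ) = 0 := by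
  constructor
  · rintro ⟨hne, h | h⟩
    · exact h
    · exact h.elim
  · intro h
    exact ⟨by simp, Or.inl h⟩

lemma adj_inl_inrr {s : Fin (p+2)} {x : Fin b} :
    (pathAB (p+2) a b).Adj (Sum.inl s) (Sum.inr (Sum.inr x)) ↔ (s:ℕ) = p + 1 := by
  constructor
  · rintro ⟨hne, h | h⟩
    · omega
    · exact h.elim
  · intro h
    exact ⟨by simp, Or.inl (by omega)⟩

lemma not_adj_inr_inr {x y : Fin a ⊕ Fin b} :
    ¬ (pathAB (p+2) a b).Adj (Sum.inr x) (Sum.inr y) := by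
  rintro ⟨hne, h | h⟩ <;> rcases x with x | x <;> rcases y with y | y <;> exact h

/-- any vertex adjacent to a leaf is a path vertex -/
lemma adj_inr {x : Fin a ⊕ Fin b} {v : Vt p a b} (h : (pathAB (p+2) a b).Adj (Sum.inr x) v) :
    ∃ t : Fin (p+2), v = Sum.inl t ∧
      (∀ xa : Fin a, x = Sum.inl xa → (t:ℕ) = 0) ∧
      (∀ xb : Fin b, x = Sum.inr xb → (t:ℕ) = p + 1) := by
  rcases v with t | y
  · refine ⟨t, rfl, ?_, ?_⟩
    · rintro xa rfl
      exact (adj_inl_inrl.mp h.symm)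
    · rintro xb rfl
      have := adj_inl_inrr.mp h.symm
      omega
  · exact absurd h not_adj_inr_inr

lemma reach_inv {α : Type*} {G : SimpleGraph α} {φ : α → Prop}
    (h : ∀ x y, G.Adj x y → (φ x ↔ φ y)) {x y : α} (hxy : G.Reachable x y) : φ x ↔ φ y := by
  obtain ⟨w⟩ := hxy
  induction w with
  | nil => exact Iff.rfl
  | cons hadj _ ih => exact (h _ _ hadj).trans ih

variable {S : Set (Vt p a b)}

lemma leaf_step (hconn : ((pathAB (p+2) a b).induce S).Connected) {x : Fin a ⊕ Fin b}
    (hx : Sum.inr x ∈ S) {y : Vt p a b} (hy : y ∈ S) (hne : y ≠ Sum.inr x) :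
    ∃ t : Fin (p+2), Sum.inl t ∈ S ∧
      (∀ xa : Fin a, x = Sum.inl xa → (t:ℕ) = 0) ∧
      (∀ xb : Fin b, x = Sum.inr xb → (t:ℕ) = p + 1) := by
  obtain ⟨w⟩ := hconn.preconnected ⟨Sum.inr x, hx⟩ ⟨y, hy⟩
  cases w with
  | nil => exact absurd rfl hne
  | cons hadj w' =>
    rename_i z
    have hadj' : (pathAB (p+2) a b).Adj (Sum.inr x) z.val := hadj
    obtain ⟨t, htz, h1, h2⟩ := adj_inr hadj'
    exact ⟨t, htz ▸ z.2, h1, h2⟩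

/-- interval property for connected sets -/
lemma interval (hconn : ((pathAB (p+2) a b).induce S).Connected) {s t u : Fin (p+2)}
    (hs : Sum.inl s ∈ S) (ht : Sum.inl t ∈ S) (hsu : s ≤ u) (hut : u ≤ t) :
    Sum.inl u ∈ S := by
  by_contra hu
  -- position function
  set pos : Vt p a b → ℕ := fun v =>
    match v with
    | Sum.inl w => (w : ℕ)
    | Sum.inr (Sum.inl _) => 0
    | Sum.inr (Sum.inr _) => p + 1 with hpos
  have key : ∀ x y : ↥S, ((pathAB (p+2) a b).induce S).Adj x y →
      ((pos x.val < u) ↔ (pos y.val < u)) := by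
    rintro ⟨xv, hxv⟩ ⟨yv, hyv⟩ hadj
    have hadj' : (pathAB (p+2) a b).Adj xv yv := hadj
    rcases xv with s' | (xa | xb) <;> rcases yv with t' | (ya | yb)
    · have h := adj_inl_inl.mp hadj'
      have hs' : (s' : ℕ) ≠ (u : ℕ) := fun hh => hu (by rwa [show s' = u from Fin.ext hh] at hxv)
      have ht' : (t' : ℕ) ≠ (u : ℕ) := fun hh => hu (by rwa [show t' = u from Fin.ext hh] at hyv)
      simp only [hpos]
      omega
    · have h := adj_inl_inrl.mp hadj'
      simp only [hpos]
      omega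
    · have h := adj_inl_inrr.mp hadj'
      simp only [hpos]
      omega
    · have h := adj_inl_inrl.mp hadj'.symm
      simp only [hpos]; omega
    · exact absurd hadj' not_adj_inr_inr
    · exact absurd hadj' not_adj_inr_inr
    · have h := adj_inl_inrr.mp hadj'.symm
      simp only [hpos]; omega
    · exact absurd hadj' not_adj_inr_inr
    · exact absurd hadj' not_adj_inr_inr
  have hreach := hconn.preconnected ⟨Sum.inl s, hs⟩ ⟨Sum.inl t, ht⟩
  have := reach_inv key hreach
  have hsu' : (s : ℕ) < u := by
    rcases lt_or_eq_of_le hsu with h | h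
    · exact h
    · exact absurd (h ▸ hs) hu
  have hut' : ¬ ((t : ℕ) < u) := by
    have : (u : ℕ) ≤ t := hut
    omega
  simp only [hpos] at this
  omega


lemma reach_chain (s : ℕ) (hs : s < p+2) :
    ∀ (d : ℕ) (hsd : s + d < p+2)
      (hmem : ∀ u, s ≤ u → u ≤ s + d → ∀ (hu : u < p+2), Sum.inl (⟨u, hu⟩:Fin (p+2)) ∈ S),
      ((pathAB (p+2) a b).induce S).Reachable
        ⟨Sum.inl ⟨s, hs⟩, hmem s le_rfl (Nat.le_add_right _ _) hs⟩
        ⟨Sum.inl ⟨s+d, hsd⟩, hmem (s+d) (Nat.le_add_right _ _) le_rfl hsd⟩ := by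
  intro d
  induction d with
  | zero => intro hsd hmem; exact Reachable.refl _
  | succ d ih =>
    intro hsd hmem
    have h1 : s + d < p + 2 := by omega
    have hmem' : ∀ u, s ≤ u → u ≤ s + d → ∀ (hu : u < p+2), Sum.inl (⟨u, hu⟩:Fin (p+2)) ∈ S :=
      fun u hu1 hu2 hu => hmem u hu1 (by omega) hu
    have r1 := ih h1 hmem'
    have adj : ((pathAB (p+2) a b).induce S).Adj
        ⟨Sum.inl ⟨s+d, h1⟩, hmem _ (by omega) (by omega) _⟩
        ⟨Sum.inl ⟨s+(d+1), hsd⟩, hmem _ (Nat.le_add_right _ _) le_rfl hsd⟩ := by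
      show (pathAB (p+2) a b).Adj (Sum.inl ⟨s+d, h1⟩) (Sum.inl ⟨s+(d+1), hsd⟩)
      exact adj_inl_inl.mpr (Or.inl rfl)
    exact (r1.trans adj.reachable)

lemma reach_chain' (S : Set (Vt p a b)) (s t : Fin (p+2)) (hst : s ≤ t)
    (hmem : ∀ u : Fin (p+2), s ≤ u → u ≤ t → Sum.inl u ∈ S) :
    ((pathAB (p+2) a b).induce S).Reachable
      ⟨Sum.inl s, hmem s le_rfl hst⟩ ⟨Sum.inl t, hmem t hst le_rfl⟩ := by
  have hst' : (s : ℕ) ≤ (t : ℕ) := hst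
  have hmem' : ∀ u, (s:ℕ) ≤ u → u ≤ (s:ℕ) + ((t:ℕ) - (s:ℕ)) → ∀ (hu : u < p+2),
      Sum.inl (⟨u, hu⟩:Fin (p+2)) ∈ S := by
    intro u h1 h2 hu
    exact hmem ⟨u, hu⟩ (by simpa [Fin.le_def] using h1) (by simp [Fin.le_def]; omega)
  have h := reach_chain (S := S) (s:ℕ) s.isLt ((t:ℕ) - (s:ℕ)) (by omega) hmem'
  have e1 : (⟨Sum.inl ⟨(s:ℕ), s.isLt⟩, hmem' (s:ℕ) le_rfl (Nat.le_add_right _ _) s.isLt⟩ :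
      ↥S) = ⟨Sum.inl s, hmem s le_rfl hst⟩ := by
    apply Subtype.ext; rfl
  have e2 : (⟨Sum.inl ⟨(s:ℕ) + ((t:ℕ) - (s:ℕ)), by omega⟩,
      hmem' _ (Nat.le_add_right _ _) le_rfl (by omega)⟩ : ↥S) = ⟨Sum.inl t, hmem t hst le_rfl⟩ := by
    apply Subtype.ext
    show Sum.inl _ = Sum.inl _
    congr 1
    apply Fin.ext
    show (s:ℕ) + ((t:ℕ) - (s:ℕ)) = (t:ℕ)
    omega
  rwa [e1, e2] at h

lemma shape_connected (i j : Fin (p+2)) (hij : i ≤ j) (A : Set (Fin a)) (B : Set (Fin b))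
    (hA : A.Nonempty → i = 0) (hB : B.Nonempty → j = Fin.last (p+1)) :
    ((pathAB (p+2) a b).induce (shape i j A B)).Connected := by
  have hi : Sum.inl i ∈ shape i j A B := inl_mem_shape.mpr ⟨le_rfl, hij⟩
  have hj : Sum.inl j ∈ shape i j A B := inl_mem_shape.mpr ⟨hij, le_rfl⟩
  rw [connected_iff]
  refine ⟨?_, ⟨⟨Sum.inl i, hi⟩⟩⟩
  have hchain : ((pathAB (p+2) a b).induce (shape i j A B)).Reachable
      ⟨Sum.inl i, hi⟩ ⟨Sum.inl j, hj⟩ := by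
    have := reach_chain' (shape i j A B) i j hij
      (fun u h1 h2 => inl_mem_shape.mpr ⟨h1, h2⟩)
    exact this
  have key : ∀ z : ↥(shape i j A B),
      ((pathAB (p+2) a b).induce (shape i j A B)).Reachable z ⟨Sum.inl i, hi⟩ := by
    rintro ⟨v, hv⟩
    rcases v with t | (xa | xb)
    · have ht := inl_mem_shape.mp hv
      have := reach_chain' (shape i j A B) i t ht.1
        (fun u h1 h2 => inl_mem_shape.mpr ⟨h1, le_trans h2 ht.2⟩)
      exact this.symm
    · have hxa : xa ∈ A := inrl_mem_shape.mp hv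
      have hi0 : i = 0 := hA ⟨xa, hxa⟩
      have adj : ((pathAB (p+2) a b).induce (shape i j A B)).Adj
          ⟨Sum.inr (Sum.inl xa), hv⟩ ⟨Sum.inl i, hi⟩ := by
        show (pathAB (p+2) a b).Adj (Sum.inr (Sum.inl xa)) (Sum.inl i)
        exact (adj_inl_inrl.mpr (by simp [hi0])).symm
      exact adj.reachable
    · have hxb : xb ∈ B := inrr_mem_shape.mp hv
      have hjl : j = Fin.last (p+1) := hB ⟨xb, hxb⟩
      have adj : ((pathAB (p+2) a b).induce (shape i j A B)).Adj
          ⟨Sum.inr (Sum.inr xb), hv⟩ ⟨Sum.inl j, hj⟩ := by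
        show (pathAB (p+2) a b).Adj (Sum.inr (Sum.inr xb)) (Sum.inl j)
        exact (adj_inl_inrr.mpr (by simp [hjl])).symm
      exact adj.reachable.trans hchain.symm
  intro x y
  exact (key x).trans (key y).symm

lemma subtree_structure (S : Set (Vt p a b)) (hne : S.Nonempty)
    (hconn : ((pathAB (p+2) a b).induce S).Connected) :
    (∃ x : Fin a ⊕ Fin b, S = {Sum.inr x}) ∨
    ∃ (i j : Fin (p+2)) (A : Set (Fin a)) (B : Set (Fin b)),
      i ≤ j ∧ (A.Nonempty → i = 0) ∧ (B.Nonempty → j = Fin.last (p+1)) ∧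
      S = shape i j A B := by
  by_cases hP : ∃ t : Fin (p+2), Sum.inl t ∈ S
  · right
    set Pset : Set (Fin (p+2)) := {t | Sum.inl t ∈ S} with hPset
    have hPne : Pset.Nonempty := hP
    obtain ⟨i, hiP, himin⟩ := Set.exists_min_image Pset id (Set.toFinite _) hPne
    obtain ⟨j, hjP, hjmax⟩ := Set.exists_max_image Pset id (Set.toFinite _) hPne
    refine ⟨i, j, {x | Sum.inr (Sum.inl x) ∈ S}, {x | Sum.inr (Sum.inr x) ∈ S},
      himin j hjP, ?_, ?_, ?_⟩
    · rintro ⟨xa, hxa⟩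
      obtain ⟨t, htS, h1, _⟩ := leaf_step hconn hxa (y := Sum.inl i) hiP (by simp)
      have ht0 : (t:ℕ) = 0 := h1 xa rfl
      have : i ≤ t := himin t htS
      have : (i:ℕ) ≤ (t:ℕ) := this
      exact Fin.ext (by simp only [Fin.val_zero]; omega)
    · rintro ⟨xb, hxb⟩
      obtain ⟨t, htS, _, h2⟩ := leaf_step hconn hxb (y := Sum.inl j) hjP (by simp)
      have ht0 : (t:ℕ) = p + 1 := h2 xb rfl
      have h3 : t ≤ j := hjmax t htS
      have h4 : (t:ℕ) ≤ (j:ℕ) := h3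
      have h5 : (j:ℕ) ≤ p + 1 := by omega
      exact Fin.ext (by simp [Fin.last]; omega)
    · ext v
      rcases v with t | (xa | xb)
      · simp only [inl_mem_shape]
        constructor
        · intro h
          exact ⟨himin t h, hjmax t h⟩
        · rintro ⟨h1, h2⟩
          exact interval hconn hiP hjP h1 h2
      · simp only [inrl_mem_shape]; rfl
      · simp only [inrr_mem_shape]; rfl
  · left
    push_neg at hP
    obtain ⟨v, hv⟩ := hne
    rcases v with t | x
    · exact absurd hv (hP t)
    · refine ⟨x, ?_⟩
      ext y
      simp only [Set.mem_singleton_iff]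
      constructor
      · intro hy
        by_contra hne'
        obtain ⟨t, htS, -, -⟩ := leaf_step hconn hv hy hne'
        exact (hP t) htS
      · rintro rfl; exact hv

/-- the count of "interior" intervals; it is the same for all a,b so we never evaluate it -/
noncomputable def Qcard (p : ℕ) : ℕ :=
  Nat.card {q : Fin (p+1) × Fin (p+1) // q.1.succ ≤ q.2.castSucc}

def SL (p a b : ℕ) : Set (Set (Vt p a b)) :=
  (fun x : Fin a ⊕ Fin b => ({Sum.inr x} : Set (Vt p a b))) '' Set.univ

def S11 (p a b : ℕ) : Set (Set (Vt p a b)) :=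
  (fun q : Set (Fin a) × Set (Fin b) => shape 0 (Fin.last (p+1)) q.1 q.2) '' Set.univ

def S10 (p a b : ℕ) : Set (Set (Vt p a b)) :=
  (fun q : Fin (p+1) × Set (Fin a) => shape 0 q.1.castSucc q.2 (∅ : Set (Fin b))) '' Set.univ

def S01 (p a b : ℕ) : Set (Set (Vt p a b)) :=
  (fun q : Fin (p+1) × Set (Fin b) => shape q.1.succ (Fin.last (p+1)) (∅ : Set (Fin a)) q.2) ''
    Set.univ

def S00 (p a b : ℕ) : Set (Set (Vt p a b)) :=
  (fun q : {q : Fin (p+1) × Fin (p+1) // q.1.succ ≤ q.2.castSucc} =>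
    shape q.1.1.succ q.1.2.castSucc (∅ : Set (Fin a)) (∅ : Set (Fin b))) '' Set.univ

lemma shape_inj {i j i' j' : Fin (p+2)} {A A' : Set (Fin a)} {B B' : Set (Fin b)}
    (hij : i ≤ j) (hij' : i' ≤ j') (h : shape i j A B = shape i' j' A' B') :
    i = i' ∧ j = j' ∧ A = A' ∧ B = B' := by
  have m1 := h ▸ (inl_mem_shape.mpr ⟨le_rfl, hij⟩ : Sum.inl i ∈ shape i j A B)
  have m2 := h.symm ▸ (inl_mem_shape.mpr ⟨le_rfl, hij'⟩ : Sum.inl i' ∈ shape i' j' A' B')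
  have m3 := h ▸ (inl_mem_shape.mpr ⟨hij, le_rfl⟩ : Sum.inl j ∈ shape i j A B)
  have m4 := h.symm ▸ (inl_mem_shape.mpr ⟨hij', le_rfl⟩ : Sum.inl j' ∈ shape i' j' A' B')
  refine ⟨le_antisymm (inl_mem_shape.mp m2).1 (inl_mem_shape.mp m1).1,
    le_antisymm (inl_mem_shape.mp m3).2 (inl_mem_shape.mp m4).2, ?_, ?_⟩
  · ext x
    constructor
    · intro hx; exact inrl_mem_shape.mp (h ▸ inrl_mem_shape.mpr hx)
    · intro hx; exact inrl_mem_shape.mp (h.symm ▸ inrl_mem_shape.mpr hx)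
  · ext x
    constructor
    · intro hx; exact inrr_mem_shape.mp (h ▸ inrr_mem_shape.mpr hx)
    · intro hx; exact inrr_mem_shape.mp (h.symm ▸ inrr_mem_shape.mpr hx)

lemma singleton_connected (v : Vt p a b) :
    ((pathAB (p+2) a b).induce ({v} : Set (Vt p a b))).Connected := by
  rw [connected_iff]
  refine ⟨?_, ⟨⟨v, rfl⟩⟩⟩
  rintro ⟨x, hx⟩ ⟨y, hy⟩
  simp only [Set.mem_singleton_iff] at hx hy
  subst hx; subst hy
  exact Reachable.refl _

lemma succ_le_last (i : Fin (p+1)) : i.succ ≤ Fin.last (p+1) := Fin.le_last _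

lemma not_inl_zero_succ (i : Fin (p+1)) {j : Fin (p+2)} {A : Set (Fin a)} {B : Set (Fin b)} :
    Sum.inl (0 : Fin (p+2)) ∉ shape i.succ j A B := by
  intro h
  have := (inl_mem_shape.mp h).1
  have : (i.succ : ℕ) ≤ (0 : Fin (p+2)) := this
  simp [Fin.val_succ] at this

lemma not_inl_last_castSucc (j : Fin (p+1)) {i : Fin (p+2)} {A : Set (Fin a)} {B : Set (Fin b)} :
    Sum.inl (Fin.last (p+1)) ∉ shape i j.castSucc A B := by
  intro h
  have := (inl_mem_shape.mp h).2
  have h2 : ((Fin.last (p+1) : Fin (p+2)) : ℕ) ≤ (j.castSucc : ℕ) := this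
  simp [Fin.val_last, Fin.coe_castSucc] at h2
  omega

lemma setEq : {S : Set (Vt p a b) | S.Nonempty ∧ ((pathAB (p+2) a b).induce S).Connected} =
    SL p a b ∪ (S11 p a b ∪ (S10 p a b ∪ (S01 p a b ∪ S00 p a b))) := by
  ext S
  simp only [Set.mem_setOf_eq, Set.mem_union]
  constructor
  · rintro ⟨hne, hconn⟩
    rcases subtree_structure S hne hconn with ⟨x, rfl⟩ | ⟨i, j, A, B, hij, hA, hB, rfl⟩
    · exact Or.inl ⟨x, Set.mem_univ _, rfl⟩
    · by_cases hi : i = 0 <;> by_cases hj : j = Fin.last (p+1)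
      · exact Or.inr (Or.inl ⟨(A, B), Set.mem_univ _, by rw [← hi, ← hj]⟩)
      · have hBe : B = ∅ := Set.not_nonempty_iff_eq_empty.mp (fun hBn => hj (hB hBn))
        obtain ⟨j', rfl⟩ := Fin.exists_castSucc_eq.mpr hj
        exact Or.inr (Or.inr (Or.inl ⟨(j', A), Set.mem_univ _, by rw [← hi, ← hBe]⟩))
      · have hAe : A = ∅ := Set.not_nonempty_iff_eq_empty.mp (fun hAn => hi (hA hAn))
        obtain ⟨i', rfl⟩ := Fin.exists_succ_eq_of_ne_zero hi
        exact Or.inr (Or.inr (Or.inr (Or.inl ⟨(i', B), Set.mem_univ _, by rw [← hj, ← hAe]⟩)))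
      · have hAe : A = ∅ := Set.not_nonempty_iff_eq_empty.mp (fun hAn => hi (hA hAn))
        have hBe : B = ∅ := Set.not_nonempty_iff_eq_empty.mp (fun hBn => hj (hB hBn))
        obtain ⟨i', rfl⟩ := Fin.exists_succ_eq_of_ne_zero hi
        obtain ⟨j', rfl⟩ := Fin.exists_castSucc_eq.mpr hj
        exact Or.inr (Or.inr (Or.inr (Or.inr
          ⟨⟨(i', j'), hij⟩, Set.mem_univ _, by rw [← hAe, ← hBe]⟩)))
  · rintro (⟨x, -, rfl⟩ | ⟨⟨A, B⟩, -, rfl⟩ | ⟨⟨j', A⟩, -, rfl⟩ | ⟨⟨i', B⟩, -, rfl⟩ |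
      ⟨⟨⟨i', j'⟩, hq⟩, -, rfl⟩)
    · exact ⟨⟨Sum.inr x, rfl⟩, singleton_connected _⟩
    · exact ⟨⟨Sum.inl 0, inl_mem_shape.mpr ⟨le_rfl, Fin.zero_le _⟩⟩,
        shape_connected _ _ (Fin.zero_le _) _ _ (fun _ => rfl) (fun _ => rfl)⟩
    · exact ⟨⟨Sum.inl 0, inl_mem_shape.mpr ⟨le_rfl, Fin.zero_le _⟩⟩,
        shape_connected _ _ (Fin.zero_le _) _ _ (fun _ => rfl)
          (fun h => absurd h Set.not_nonempty_empty)⟩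
    · exact ⟨⟨Sum.inl i'.succ, inl_mem_shape.mpr ⟨le_rfl, succ_le_last i'⟩⟩,
        shape_connected _ _ (succ_le_last i') _ _
          (fun h => absurd h Set.not_nonempty_empty) (fun _ => rfl)⟩
    · exact ⟨⟨Sum.inl i'.succ, inl_mem_shape.mpr ⟨le_rfl, hq⟩⟩,
        shape_connected _ _ hq _ _
          (fun h => absurd h Set.not_nonempty_empty) (fun h => absurd h Set.not_nonempty_empty)⟩

lemma ncard_SL : (SL p a b).ncard = a + b := by
  rw [SL, Set.ncard_image_of_injective _ ?inj, Set.ncard_univ]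
  · simp [Nat.card_eq_fintype_card]
  case inj =>
    intro x y hxy
    simpa using hxy

lemma ncard_S11 : (S11 p a b).ncard = 2^a * 2^b := by
  rw [S11, Set.ncard_image_of_injective _ ?inj, Set.ncard_univ]
  · simp [Nat.card_eq_fintype_card, Fintype.card_set]
  case inj =>
    intro q q' h
    obtain ⟨-, -, hA, hB⟩ := shape_inj (Fin.zero_le _) (Fin.zero_le _) h
    exact Prod.ext hA hB

lemma ncard_S10 : (S10 p a b).ncard = (p+1) * 2^a := by
  rw [S10, Set.ncard_image_of_injective _ ?inj, Set.ncard_univ]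
  · simp [Nat.card_eq_fintype_card, Fintype.card_set]
  case inj =>
    intro q q' h
    obtain ⟨-, hj, hA, -⟩ := shape_inj (Fin.zero_le _) (Fin.zero_le _) h
    exact Prod.ext (Fin.castSucc_injective _ hj) hA

lemma ncard_S01 : (S01 p a b).ncard = (p+1) * 2^b := by
  rw [S01, Set.ncard_image_of_injective _ ?inj, Set.ncard_univ]
  · simp [Nat.card_eq_fintype_card, Fintype.card_set]
  case inj =>
    intro q q' h
    obtain ⟨hi, -, -, hB⟩ := shape_inj (succ_le_last _) (succ_le_last _) h
    exact Prod.ext (Fin.succ_injective _ hi) hB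

lemma ncard_S00 : (S00 p a b).ncard = Qcard p := by
  rw [S00, Set.ncard_image_of_injective _ ?inj, Set.ncard_univ, Qcard]
  case inj =>
    rintro ⟨⟨i, j⟩, hq⟩ ⟨⟨i', j'⟩, hq'⟩ h
    obtain ⟨hi, hj, -, -⟩ := shape_inj hq hq' h
    exact Subtype.ext (Prod.ext (Fin.succ_injective _ hi) (Fin.castSucc_injective _ hj))

lemma count_formula :
    numSubtrees (pathAB (p+2) a b) =
      (a + b) + (2^a * 2^b + ((p+1) * 2^a + ((p+1) * 2^b + Qcard p))) := by
  have dSL : Disjoint (SL p a b) (S11 p a b ∪ (S10 p a b ∪ (S01 p a b ∪ S00 p a b))) := by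
    rw [Set.disjoint_left]
    rintro S ⟨x, -, rfl⟩ hS'
    have hnol : ∀ (i j : Fin (p+2)) (A : Set (Fin a)) (B : Set (Fin b)), i ≤ j →
        shape i j A B ≠ {Sum.inr x} := by
      intro i j A B hij h
      have := h ▸ inl_mem_shape.mpr ⟨le_rfl, hij⟩
      simp at this
    rcases hS' with ⟨q, -, hq⟩ | ⟨q, -, hq⟩ | ⟨q, -, hq⟩ | ⟨q, -, hq⟩
    · exact hnol _ _ _ _ (Fin.zero_le _) hq
    · exact hnol _ _ _ _ (Fin.zero_le _) hq
    · exact hnol _ _ _ _ (succ_le_last _) hq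
    · exact hnol _ _ _ _ q.2 hq
  have dS11 : Disjoint (S11 p a b) (S10 p a b ∪ (S01 p a b ∪ S00 p a b)) := by
    rw [Set.disjoint_left]
    rintro S ⟨q, -, rfl⟩ hS'
    have hlast : Sum.inl (Fin.last (p+1)) ∈ shape (0 : Fin (p+2)) (Fin.last (p+1)) q.1 q.2 :=
      inl_mem_shape.mpr ⟨Fin.zero_le _, le_rfl⟩
    have hzero : Sum.inl (0 : Fin (p+2)) ∈ shape (0 : Fin (p+2)) (Fin.last (p+1)) q.1 q.2 :=
      inl_mem_shape.mpr ⟨le_rfl, Fin.zero_le _⟩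
    rcases hS' with ⟨q', -, hq⟩ | ⟨q', -, hq⟩ | ⟨q', -, hq⟩
    · dsimp only at hq
      exact not_inl_last_castSucc q'.1 (hq ▸ hlast)
    · dsimp only at hq
      exact not_inl_zero_succ q'.1 (hq ▸ hzero)
    · dsimp only at hq
      exact not_inl_zero_succ q'.1.1 (hq ▸ hzero)
  have dS10 : Disjoint (S10 p a b) (S01 p a b ∪ S00 p a b) := by
    rw [Set.disjoint_left]
    rintro S ⟨q, -, rfl⟩ hS'
    have hzero : Sum.inl (0 : Fin (p+2)) ∈ shape (0 : Fin (p+2)) q.1.castSucc q.2 (∅ : Set (Fin b)) :=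
      inl_mem_shape.mpr ⟨le_rfl, Fin.zero_le _⟩
    rcases hS' with ⟨q', -, hq⟩ | ⟨q', -, hq⟩
    · dsimp only at hq
      exact not_inl_zero_succ q'.1 (hq ▸ hzero)
    · dsimp only at hq
      exact not_inl_zero_succ q'.1.1 (hq ▸ hzero)
  have dS01 : Disjoint (S01 p a b) (S00 p a b) := by
    rw [Set.disjoint_left]
    rintro S ⟨q, -, rfl⟩ ⟨q', -, hq⟩
    have hlast : Sum.inl (Fin.last (p+1)) ∈ shape q.1.succ (Fin.last (p+1)) (∅ : Set (Fin a)) q.2 :=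
      inl_mem_shape.mpr ⟨succ_le_last _, le_rfl⟩
    dsimp only at hq
    exact not_inl_last_castSucc q'.1.2 (hq ▸ hlast)
  rw [numSubtrees, setEq,
    Set.ncard_union_eq dSL (Set.toFinite _) (Set.toFinite _),
    Set.ncard_union_eq dS11 (Set.toFinite _) (Set.toFinite _),
    Set.ncard_union_eq dS10 (Set.toFinite _) (Set.toFinite _),
    Set.ncard_union_eq dS01 (Set.toFinite _) (Set.toFinite _),
    ncard_SL, ncard_S11, ncard_S10, ncard_S01, ncard_S00]

end PPT

theorem numSubtrees_pathAB_gt (n k a b : ℕ) (hb : 1 ≤ b) (hgap : b + 2 ≤ a)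
    (hab : a + b = k) (hm : 3 ≤ n - k) :
    numSubtrees (pathAB (n - k) (a - 1) (b + 1)) < numSubtrees (pathAB (n - k) a b) := by
  obtain ⟨p, hp⟩ : ∃ p, n - k = p + 2 := ⟨n - k - 2, by omega⟩
  rw [hp, PPT.count_formula, PPT.count_formula]
  obtain ⟨c, hc⟩ : ∃ c, a = c + 1 := ⟨a - 1, by omega⟩
  subst hc
  simp only [Nat.add_sub_cancel]
  have h2 : 2^b < 2^c := Nat.pow_lt_pow_right one_lt_two (by omega)
  have h4 : p * 2^b ≤ p * 2^c := Nat.mul_le_mul_left _ h2.le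
  have e1 : 2^(c+1) = 2 * 2^c := by ring
  have e2 : 2^(b+1) = 2 * 2^b := by ring
  rw [e1, e2]
  ring_nf
  omega
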